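/- Let p < q < r be distinct odd primes, N = p²q²r², φ(a,b,c) = q²r²a + p²r²b + p²q²c, and H₀ = {(a,b,c) : 0 ≤ a ≤ p−1, 0 ≤ b ≤ q−1, 0 ≤ c ≤ r−1}, with φ(H₀) viewed as a subset of {0,1,…,N−1} ⊂ ℤ. Then for ξ ∈ ℝ, the exponential sum Σ_{h ∈ φ(H₀)} e^{−2πi h ξ/N} equals zero only if ξ ∈ ℤ; equivalently, the Fourier transform of 1_{φ(H₀)} on ℝ/ℤ has no zeros outside (1/(p²q²r²))ℤ. -/

import Mathlib

open Real



lemma geom_zero (n : ℕ) (hn : 0 < n) (ξ : ℝ)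
    (h : ∑ a ∈ Finset.range n,
      Complex.exp (-(2*π*Complex.I) * (ξ:ℂ) / (n:ℂ)^2 * (a:ℂ)) = 0) :
    ∃ k : ℤ, ξ = (k : ℝ) := by
  set c : ℂ := -(2*π*Complex.I) * (ξ:ℂ) / (n:ℂ)^2 with hc
  have hz : ∀ a ∈ Finset.range n, Complex.exp (c * (a:ℂ)) = Complex.exp c ^ a := by
    intro a _
    rw [← Complex.exp_nat_mul]
    ring_nf
  rw [Finset.sum_congr rfl hz] at h
  have h2 : Complex.exp c ^ n = 1 := by
    have hg := geom_sum_mul (Complex.exp c) n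
    rw [h, zero_mul] at hg
    have : Complex.exp c ^ n - 1 = 0 := hg.symm
    linear_combination this
  rw [← Complex.exp_nat_mul] at h2
  obtain ⟨m, hm⟩ := Complex.exp_eq_one_iff.mp h2
  have hn' : (n:ℂ) ≠ 0 := Nat.cast_ne_zero.mpr hn.ne'
  have hπ : (π:ℂ) ≠ 0 := Complex.ofReal_ne_zero.mpr Real.pi_ne_zero
  rw [hc] at hm
  have hξ : (ξ:ℂ) = ((-(m * n) : ℤ) : ℂ) := by
    push_cast
    field_simp at hm
    have hne : (2*(π:ℂ)*Complex.I*(n:ℂ)) ≠ 0 := by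
      simp [hπ, hn', Complex.I_ne_zero]
    have key : (ξ:ℂ) * (2*(π:ℂ)*Complex.I*(n:ℂ)) = (-((m:ℂ)*(n:ℂ))) * (2*(π:ℂ)*Complex.I*(n:ℂ)) := by
      linear_combination -(2*(π:ℂ)*Complex.I*(n:ℂ)) * hm
    exact mul_right_cancel₀ hne key
  refine ⟨-(m*n), ?_⟩
  exact_mod_cast hξ

lemma triple_sum_fact (A B C : Finset ℕ) (F G H : ℕ → ℂ) :
    ∑ t ∈ A ×ˢ B ×ˢ C, F t.1 * (G t.2.1 * H t.2.2)
      = (∑ a ∈ A, F a) * ((∑ b ∈ B, G b) * (∑ c ∈ C, H c)) := by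
  trans ∑ a ∈ A, ∑ y ∈ B ×ˢ C, F a * (G y.1 * H y.2)
  · exact Finset.sum_product _ _ _
  trans ∑ a ∈ A, F a * ∑ y ∈ B ×ˢ C, G y.1 * H y.2
  · exact Finset.sum_congr rfl fun a _ => (Finset.mul_sum _ _ _).symm
  rw [← Finset.sum_mul]
  congr 1
  trans ∑ b ∈ B, ∑ c ∈ C, G b * H c
  · exact Finset.sum_product _ _ _
  exact (Finset.sum_mul_sum B C G H).symm


/-- Let `p < q < r` be odd primes, `N = p²q²r²`, `φ(a,b,c) = q²r²a + p²r²b + p²q²c`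
and `φ(H₀) = φ({0,…,p-1} × {0,…,q-1} × {0,…,r-1}) ⊂ {0,…,N-1} ⊂ ℤ`. If the
exponential sum `∑_{h ∈ φ(H₀)} e^{-2πihξ/N}` vanishes, then `ξ ∈ ℤ`; i.e. the
Fourier transform of `1_{φ(H₀)}` on `ℝ/ℤ` has no zeros outside `(1/N)ℤ`. -/
theorem stmt_19 (p q r : ℕ) (hp : p.Prime) (hq : q.Prime) (hr : r.Prime)
    (hpodd : Odd p) (hqodd : Odd q) (hrodd : Odd r) (hpq : p < q) (hqr : q < r)
    (ξ : ℝ)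
    (hsum : ∑ h ∈ (Finset.range p ×ˢ Finset.range q ×ˢ Finset.range r).image
        (fun t : ℕ × ℕ × ℕ =>
          (q : ℤ)^2 * (r : ℤ)^2 * t.1 + (p : ℤ)^2 * (r : ℤ)^2 * t.2.1 +
            (p : ℤ)^2 * (q : ℤ)^2 * t.2.2),
      Complex.exp (-(2 * π * Complex.I) * (h : ℂ) * (ξ : ℂ) /
        ((p : ℂ)^2 * (q : ℂ)^2 * (r : ℂ)^2)) = 0) :
    ∃ k : ℤ, ξ = (k : ℝ) := by
  have hp2 : 2 ≤ p := hp.two_le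
  have hq2 : 2 ≤ q := hq.two_le
  have hr2 : 2 ≤ r := hr.two_le
  -- coprimality
  have cpq : IsCoprime ((p:ℤ)^2) ((q:ℤ)^2) :=
    (Nat.isCoprime_iff_coprime.mpr ((Nat.coprime_primes hp hq).mpr hpq.ne)).pow
  have cpr : IsCoprime ((p:ℤ)^2) ((r:ℤ)^2) :=
    (Nat.isCoprime_iff_coprime.mpr ((Nat.coprime_primes hp hr).mpr (hpq.trans hqr).ne)).pow
  have cqr : IsCoprime ((q:ℤ)^2) ((r:ℤ)^2) :=
    (Nat.isCoprime_iff_coprime.mpr ((Nat.coprime_primes hq hr).mpr hqr.ne)).pow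
  -- injectivity
  have hinj : ∀ x ∈ Finset.range p ×ˢ Finset.range q ×ˢ Finset.range r,
      ∀ y ∈ Finset.range p ×ˢ Finset.range q ×ˢ Finset.range r,
      (fun t : ℕ × ℕ × ℕ =>
          (q : ℤ)^2 * (r : ℤ)^2 * t.1 + (p : ℤ)^2 * (r : ℤ)^2 * t.2.1 +
            (p : ℤ)^2 * (q : ℤ)^2 * t.2.2) x =
      (fun t : ℕ × ℕ × ℕ =>
          (q : ℤ)^2 * (r : ℤ)^2 * t.1 + (p : ℤ)^2 * (r : ℤ)^2 * t.2.1 +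
            (p : ℤ)^2 * (q : ℤ)^2 * t.2.2) y → x = y := by
    rintro ⟨a, b, c⟩ ht ⟨a', b', c'⟩ ht' heq
    simp only [Finset.mem_product, Finset.mem_range] at ht ht'
    obtain ⟨ha, hb, hc⟩ := ht
    obtain ⟨ha', hb', hc'⟩ := ht'
    simp only at heq
    -- a = a'
    have hdvd1 : ((p:ℤ)^2) ∣ ((q:ℤ)^2*(r:ℤ)^2) * ((a:ℤ) - a') :=
      ⟨(r:ℤ)^2*((b':ℤ) - b) + (q:ℤ)^2*((c':ℤ) - c), by linear_combination heq⟩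
    have hdvd1' : ((p:ℤ)^2) ∣ ((a:ℤ) - a') :=
      (cpq.mul_right cpr).dvd_of_dvd_mul_left hdvd1
    have haa : (a:ℤ) = a' := by
      have := Int.eq_zero_of_abs_lt_dvd hdvd1' (by
        rw [abs_lt]
        constructor <;> push_cast <;> nlinarith)
      linarith
    have ha2 : a = a' := by exact_mod_cast haa
    subst ha2
    have hpne : ((p:ℤ)^2) ≠ 0 := pow_ne_zero _ (by exact_mod_cast (by omega : p ≠ 0))
    have heq2 : (r:ℤ)^2 * ((b:ℤ) - b') = (q:ℤ)^2 * ((c':ℤ) - c) := by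
      apply mul_left_cancel₀ hpne
      linear_combination heq
    have hdvd2 : ((q:ℤ)^2) ∣ ((r:ℤ)^2) * ((b:ℤ) - b') := ⟨(c':ℤ) - c, heq2⟩
    have hdvd2' : ((q:ℤ)^2) ∣ ((b:ℤ) - b') := cqr.dvd_of_dvd_mul_left hdvd2
    have hbb : (b:ℤ) = b' := by
      have := Int.eq_zero_of_abs_lt_dvd hdvd2' (by
        rw [abs_lt]
        constructor <;> push_cast <;> nlinarith)
      linarith
    have hb2 : b = b' := by exact_mod_cast hbb
    subst hb2
    have hqne : ((q:ℤ)^2) ≠ 0 := pow_ne_zero _ (by exact_mod_cast (by omega : q ≠ 0))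
    have hcc : (c:ℤ) = c' := by
      have h0 : (q:ℤ)^2 * ((c':ℤ) - c) = 0 := by linear_combination -heq2
      have := (mul_eq_zero.mp h0).resolve_left hqne
      linarith
    have hc2 : c = c' := by exact_mod_cast hcc
    subst hc2
    rfl
  rw [Finset.sum_image hinj] at hsum
  set F : ℕ → ℕ → ℂ := fun n a =>
    Complex.exp (-(2*π*Complex.I) * (ξ:ℂ) / (n:ℂ)^2 * (a:ℂ)) with hF
  have hpC : (p:ℂ) ≠ 0 := Nat.cast_ne_zero.mpr (by omega)
  have hqC : (q:ℂ) ≠ 0 := Nat.cast_ne_zero.mpr (by omega)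
  have hrC : (r:ℂ) ≠ 0 := Nat.cast_ne_zero.mpr (by omega)
  have hsplit : ∀ t ∈ Finset.range p ×ˢ Finset.range q ×ˢ Finset.range r,
      Complex.exp (-(2 * π * Complex.I) *
          ((((q : ℤ)^2 * (r : ℤ)^2 * t.1 + (p : ℤ)^2 * (r : ℤ)^2 * t.2.1 +
            (p : ℤ)^2 * (q : ℤ)^2 * t.2.2 : ℤ)) : ℂ) * (ξ : ℂ) /
        ((p : ℂ)^2 * (q : ℂ)^2 * (r : ℂ)^2)) = F p t.1 * (F q t.2.1 * F r t.2.2) := by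
    rintro ⟨a, b, c⟩ -
    simp only [hF]
    rw [← Complex.exp_add, ← Complex.exp_add]
    congr 1
    push_cast
    field_simp
    ring
  rw [Finset.sum_congr rfl hsplit] at hsum
  have hfact : ∑ t ∈ Finset.range p ×ˢ Finset.range q ×ˢ Finset.range r,
      F p t.1 * (F q t.2.1 * F r t.2.2)
      = (∑ a ∈ Finset.range p, F p a) *
        ((∑ b ∈ Finset.range q, F q b) * (∑ c ∈ Finset.range r, F r c)) :=
    triple_sum_fact _ _ _ _ _ _
  rw [hfact] at hsum
  rcases mul_eq_zero.mp hsum with h1 | h23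
  · exact geom_zero p (by omega) ξ h1
  · rcases mul_eq_zero.mp h23 with h2 | h3
    · exact geom_zero q (by omega) ξ h2
    · exact geom_zero r (by omega) ξ h3
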